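/- Let V = uT + vN + wB be a unit vector field along γ (u² + v² + w² = 1) and let β(s) = ∫V(s)ds + λ(s)N(s) for a smooth function λ. Suppose β is regular and admits a Frenet frame {T̄, N̄, B̄} whose principal normal satisfies N̄ = εN with ε = ±1, and suppose ⟨T(s), T̄(s)⟩ ≠ 0 for all s, writing ⟨T, T̄⟩ = cos θ(s). Then λ′(s) = −v(s) for all s (i.e. λ(s) = −∫v(s)ds up to constant), the angle θ is constant, and λ(κ tan θ + τ) = u tan θ − w holds identically on I. -/

import Mathlib

open scoped RealInnerProductSpace

noncomputable def cross3 (x y : EuclideanSpace ℝ (Fin 3)) : EuclideanSpace ℝ (Fin 3) :=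
  WithLp.toLp 2 ![x 1 * y 2 - x 2 * y 1, x 2 * y 0 - x 0 * y 2, x 0 * y 1 - x 1 * y 0]

lemma const_on_Ioo_aux {f : ℝ → ℝ} {a b : ℝ}
    (h : ∀ s ∈ Set.Ioo a b, HasDerivAt f 0 s) :
    ∀ x ∈ Set.Ioo a b, ∀ y ∈ Set.Ioo a b, x ≤ y → f y = f x := by
  intro x hx y hy hxy
  have hsub : Set.Icc x y ⊆ Set.Ioo a b := fun t ht =>
    ⟨lt_of_lt_of_le hx.1 ht.1, lt_of_le_of_lt ht.2 hy.2⟩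
  exact constant_of_has_deriv_right_zero
    (fun t ht => ((h t (hsub ht)).continuousAt).continuousWithinAt)
    (fun t ht => ((h t (hsub (Set.Ico_subset_Icc_self ht))).hasDerivWithinAt))
    y (Set.right_mem_Icc.2 hxy)

lemma const_on_Ioo {f : ℝ → ℝ} {a b : ℝ}
    (h : ∀ s ∈ Set.Ioo a b, HasDerivAt f 0 s) :
    ∀ x ∈ Set.Ioo a b, ∀ y ∈ Set.Ioo a b, f x = f y := by
  intro x hx y hy
  rcases le_total x y with hl | hl
  · exact (const_on_Ioo_aux h x hx y hy hl).symm
  · exact const_on_Ioo_aux h y hy x hx hl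

/-- If β(s) = ∫V ds + λ(s)N(s) with V = uT+vN+wB unit, β regular with
Frenet principal normal N̄ = ±N, and ⟪T, T̄⟫ ≠ 0 (written cos θ), then λ' = -v,
the angle θ is constant, and λ(κ tan θ + τ) = u tan θ - w identically. -/
theorem stmt_0 (a b : ℝ) (γ T N B : ℝ → EuclideanSpace ℝ (Fin 3)) (κ τ : ℝ → ℝ)
    (hγT : ∀ s ∈ Set.Ioo a b, HasDerivAt γ (T s) s)
    (hT1 : ∀ s ∈ Set.Ioo a b, ‖T s‖ = 1)
    (hN1 : ∀ s ∈ Set.Ioo a b, ‖N s‖ = 1)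
    (hB1 : ∀ s ∈ Set.Ioo a b, ‖B s‖ = 1)
    (hTN : ∀ s ∈ Set.Ioo a b, ⟪T s, N s⟫ = 0)
    (hTB : ∀ s ∈ Set.Ioo a b, ⟪T s, B s⟫ = 0)
    (hNB : ∀ s ∈ Set.Ioo a b, ⟪N s, B s⟫ = 0)
    (horient : ∀ s ∈ Set.Ioo a b, B s = cross3 (T s) (N s))
    (hκpos : ∀ s ∈ Set.Ioo a b, 0 < κ s)
    (hTder : ∀ s ∈ Set.Ioo a b, HasDerivAt T (κ s • N s) s)
    (hNder : ∀ s ∈ Set.Ioo a b, HasDerivAt N ((-κ s) • T s + τ s • B s) s)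
    (hBder : ∀ s ∈ Set.Ioo a b, HasDerivAt B ((-τ s) • N s) s)
    (u v w lam lamd σ κb : ℝ → ℝ)
    (Vint β Tb Nb : ℝ → EuclideanSpace ℝ (Fin 3))
    (huvw : ∀ s ∈ Set.Ioo a b, u s ^ 2 + v s ^ 2 + w s ^ 2 = 1)
    (hlam : ∀ s ∈ Set.Ioo a b, HasDerivAt lam (lamd s) s)
    (hVint : ∀ s ∈ Set.Ioo a b, HasDerivAt Vint (u s • T s + v s • N s + w s • B s) s)
    (hβ : ∀ s, β s = Vint s + lam s • N s)
    (hβreg : ∀ s ∈ Set.Ioo a b, HasDerivAt β (σ s • Tb s) s)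
    (hσpos : ∀ s ∈ Set.Ioo a b, 0 < σ s)
    (hTb1 : ∀ s ∈ Set.Ioo a b, ‖Tb s‖ = 1)
    (hTbder : ∀ s ∈ Set.Ioo a b, HasDerivAt Tb ((σ s * κb s) • Nb s) s)
    (hκbpos : ∀ s ∈ Set.Ioo a b, 0 < κb s)
    (hNb1 : ∀ s ∈ Set.Ioo a b, ‖Nb s‖ = 1)
    (hNbN : ∀ s ∈ Set.Ioo a b, Nb s = N s ∨ Nb s = -N s)
    (hangle : ∀ s ∈ Set.Ioo a b, ⟪T s, Tb s⟫ ≠ 0) :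
    (∀ s ∈ Set.Ioo a b, lamd s = -v s) ∧
    ∃ θ : ℝ, ∀ s ∈ Set.Ioo a b,
      ⟪T s, Tb s⟫ = Real.cos θ ∧
      lam s * (κ s * Real.tan θ + τ s) = u s * Real.tan θ - w s := by
  -- basic inner product facts
  have hTT : ∀ s ∈ Set.Ioo a b, ⟪T s, T s⟫ = 1 := fun s hs => by
    rw [real_inner_self_eq_norm_sq, hT1 s hs]; norm_num
  have hNN : ∀ s ∈ Set.Ioo a b, ⟪N s, N s⟫ = 1 := fun s hs => by
    rw [real_inner_self_eq_norm_sq, hN1 s hs]; norm_num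
  have hBB : ∀ s ∈ Set.Ioo a b, ⟪B s, B s⟫ = 1 := fun s hs => by
    rw [real_inner_self_eq_norm_sq, hB1 s hs]; norm_num
  have hNT : ∀ s ∈ Set.Ioo a b, ⟪N s, T s⟫ = 0 := fun s hs => by
    rw [real_inner_comm]; exact hTN s hs
  have hBT : ∀ s ∈ Set.Ioo a b, ⟪B s, T s⟫ = 0 := fun s hs => by
    rw [real_inner_comm]; exact hTB s hs
  have hBN : ∀ s ∈ Set.Ioo a b, ⟪B s, N s⟫ = 0 := fun s hs => by
    rw [real_inner_comm]; exact hNB s hs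
  -- β' decomposition in the frame
  have hβfun : β = fun t => Vint t + lam t • N t := funext hβ
  have hkey : ∀ s ∈ Set.Ioo a b, σ s • Tb s =
      (u s - lam s * κ s) • T s + (v s + lamd s) • N s + (w s + lam s * τ s) • B s := by
    intro s hs
    have h1 : HasDerivAt (fun t => Vint t + lam t • N t)
        ((u s • T s + v s • N s + w s • B s) +
          (lam s • ((-κ s) • T s + τ s • B s) + lamd s • N s)) s :=
      (hVint s hs).add ((hlam s hs).smul (hNder s hs))
    have h2 := hβreg s hs
    rw [hβfun] at h2
    rw [h2.unique h1]
    module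
  -- Tb ⊥ Nb, hence Tb ⊥ N
  have hTbN : ∀ s ∈ Set.Ioo a b, ⟪Tb s, N s⟫ = 0 := by
    intro s hs
    have hd := (hTbder s hs).inner ℝ (hTbder s hs)
    have hc : HasDerivAt (fun t => ⟪Tb t, Tb t⟫) 0 s := by
      have heq : (fun t => ⟪Tb t, Tb t⟫) =ᶠ[nhds s] fun _ => (1 : ℝ) := by
        filter_upwards [Ioo_mem_nhds hs.1 hs.2] with t ht
        rw [real_inner_self_eq_norm_sq, hTb1 t ht]; norm_num
      exact (hasDerivAt_const s (1 : ℝ)).congr_of_eventuallyEq heq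
    have h0 := hc.unique hd
    have hTbNb : ⟪Tb s, Nb s⟫ = 0 := by
      have hpos : 0 < σ s * κb s := mul_pos (hσpos s hs) (hκbpos s hs)
      rw [real_inner_smul_right, real_inner_smul_left, real_inner_comm (Nb s) (Tb s)] at h0
      have h1 : σ s * κb s * ⟪Nb s, Tb s⟫ = 0 := by linarith
      rw [real_inner_comm]
      exact (mul_eq_zero.1 h1).resolve_left hpos.ne'
    rcases hNbN s hs with h | h
    · rw [← h]; exact hTbNb
    · have : ⟪Tb s, -N s⟫ = 0 := by rw [← h]; exact hTbNb
      simpa [inner_neg_right] using this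
  have hNTb : ∀ s ∈ Set.Ioo a b, ⟪N s, Tb s⟫ = 0 := fun s hs => by
    rw [real_inner_comm]; exact hTbN s hs
  have hTNb : ∀ s ∈ Set.Ioo a b, ⟪T s, Nb s⟫ = 0 := by
    intro s hs
    rcases hNbN s hs with h | h <;> rw [h] <;> simp [inner_neg_right, hTN s hs]
  have hBNb : ∀ s ∈ Set.Ioo a b, ⟪B s, Nb s⟫ = 0 := by
    intro s hs
    rcases hNbN s hs with h | h <;> rw [h] <;> simp [inner_neg_right, hBN s hs]
  -- coordinates of σ•Tb
  have hpT : ∀ s ∈ Set.Ioo a b, σ s * ⟪T s, Tb s⟫ = u s - lam s * κ s := by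
    intro s hs
    have := congrArg (fun x => ⟪T s, x⟫) (hkey s hs)
    simp only [inner_add_right, real_inner_smul_right, hTT s hs, hTN s hs, hTB s hs] at this
    linarith
  have hpN : ∀ s ∈ Set.Ioo a b, σ s * ⟪N s, Tb s⟫ = v s + lamd s := by
    intro s hs
    have := congrArg (fun x => ⟪N s, x⟫) (hkey s hs)
    simp only [inner_add_right, real_inner_smul_right, hNN s hs, hNT s hs, hNB s hs] at this
    linarith
  have hpB : ∀ s ∈ Set.Ioo a b, σ s * ⟪B s, Tb s⟫ = w s + lam s * τ s := by
    intro s hs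
    have := congrArg (fun x => ⟪B s, x⟫) (hkey s hs)
    simp only [inner_add_right, real_inner_smul_right, hBB s hs, hBT s hs, hBN s hs] at this
    linarith
  -- first conclusion
  have hlamd : ∀ s ∈ Set.Ioo a b, lamd s = -v s := by
    intro s hs
    have h1 := hpN s hs
    rw [hNTb s hs, mul_zero] at h1
    linarith
  refine ⟨hlamd, ?_⟩
  -- p² + r² = 1
  have hpr1 : ∀ s ∈ Set.Ioo a b, ⟪T s, Tb s⟫ ^ 2 + ⟪B s, Tb s⟫ ^ 2 = 1 := by
    intro s hs
    have hTbTb : ⟪Tb s, Tb s⟫ = 1 := by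
      rw [real_inner_self_eq_norm_sq, hTb1 s hs]; norm_num
    have hsq : σ s ^ 2 = (u s - lam s * κ s) ^ 2 + (v s + lamd s) ^ 2
        + (w s + lam s * τ s) ^ 2 := by
      have := congrArg (fun x => ⟪x, x⟫) (hkey s hs)
      simp only [inner_add_left, inner_add_right, real_inner_smul_left,
        real_inner_smul_right, hTT s hs, hNN s hs, hBB s hs, hTN s hs, hTB s hs,
        hNB s hs, hNT s hs, hBT s hs, hBN s hs, hTbTb] at this
      nlinarith [this]
    have h1 := hpT s hs
    have h2 := hpN s hs
    have h3 := hpB s hs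
    rw [hNTb s hs, mul_zero] at h2
    have hσ2 : (0:ℝ) < σ s ^ 2 := pow_pos (hσpos s hs) 2
    have e1 : (σ s * ⟪T s, Tb s⟫) ^ 2 = (u s - lam s * κ s) ^ 2 := by rw [h1]
    have e2 : (σ s * ⟪B s, Tb s⟫) ^ 2 = (w s + lam s * τ s) ^ 2 := by rw [h3]
    have hq : (v s + lamd s) ^ 2 = 0 := by rw [← h2]; ring
    have h4 : σ s ^ 2 * (⟪T s, Tb s⟫ ^ 2 + ⟪B s, Tb s⟫ ^ 2) = σ s ^ 2 * 1 := by
      linear_combination e1 + e2 - hq - hsq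
    exact mul_left_cancel₀ hσ2.ne' h4
  -- p and r have zero derivative
  have hp0 : ∀ s ∈ Set.Ioo a b, HasDerivAt (fun t => ⟪T t, Tb t⟫) 0 s := by
    intro s hs
    have hd := (hTder s hs).inner ℝ (hTbder s hs)
    have : ⟪T s, (σ s * κb s) • Nb s⟫ + ⟪κ s • N s, Tb s⟫ = 0 := by
      rw [real_inner_smul_right, real_inner_smul_left, hTNb s hs, hNTb s hs]; ring
    rwa [this] at hd
  have hr0 : ∀ s ∈ Set.Ioo a b, HasDerivAt (fun t => ⟪B t, Tb t⟫) 0 s := by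
    intro s hs
    have hd := (hBder s hs).inner ℝ (hTbder s hs)
    have : ⟪B s, (σ s * κb s) • Nb s⟫ + ⟪(-τ s) • N s, Tb s⟫ = 0 := by
      rw [real_inner_smul_right, real_inner_smul_left, hBNb s hs, hNTb s hs]; ring
    rwa [this] at hd
  rcases Set.eq_empty_or_nonempty (Set.Ioo a b) with he | ⟨s₀, hs₀⟩
  · exact ⟨0, fun s hs => by rw [he] at hs; exact absurd hs (Set.notMem_empty s)⟩
  set c := ⟪T s₀, Tb s₀⟫ with hc_def
  set d := ⟪B s₀, Tb s₀⟫ with hd_def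
  have hpc : ∀ s ∈ Set.Ioo a b, ⟪T s, Tb s⟫ = c := fun s hs =>
    const_on_Ioo hp0 s hs s₀ hs₀
  have hrd : ∀ s ∈ Set.Ioo a b, ⟪B s, Tb s⟫ = d := fun s hs =>
    const_on_Ioo hr0 s hs s₀ hs₀
  have hc0 : c ≠ 0 := hangle s₀ hs₀
  have hcd : c ^ 2 + d ^ 2 = 1 := hpr1 s₀ hs₀
  have hc1 : -1 ≤ c := by nlinarith
  have hc2 : c ≤ 1 := by nlinarith
  refine ⟨if 0 ≤ d then Real.arccos c else -Real.arccos c, ?_⟩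
  have hcos : Real.cos (if 0 ≤ d then Real.arccos c else -Real.arccos c) = c := by
    split <;> simp [Real.cos_arccos hc1 hc2]
  have hsin : Real.sin (if 0 ≤ d then Real.arccos c else -Real.arccos c) = d := by
    have hs1 : Real.sin (Real.arccos c) = |d| := by
      rw [Real.sin_arccos]
      rw [show 1 - c ^ 2 = d ^ 2 by linarith, Real.sqrt_sq_eq_abs]
    split_ifs with h
    · rw [hs1, abs_of_nonneg h]
    · rw [Real.sin_neg, hs1, abs_of_neg (not_le.1 h)]; ring
  have htan : Real.tan (if 0 ≤ d then Real.arccos c else -Real.arccos c) = d / c := by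
    rw [Real.tan_eq_sin_div_cos, hsin, hcos]
  intro s hs
  refine ⟨by rw [hpc s hs, hcos], ?_⟩
  rw [htan]
  have h1 := hpT s hs
  have h2 := hpB s hs
  rw [hpc s hs] at h1
  rw [hrd s hs] at h2
  field_simp
  linear_combination d * h1 - c * h2
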